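/- Let C₁ < 2, B = √(2(2−C₁)), A = (2−C₁)^{1/4}/2. Then h(z) = −2 + 2B − 3B·tanh²(A(8^{1/4} arctan z + C)) solves the ODE (z²+1)²h'' + 2z(z²+1)h' + h² + 4h + 2C₁ = 0, where C₂ := 12C₁ − 16 − 4(2−C₁)√(2(2−C₁)) is the associated energy constant, in the sense that (z²+1)²(h')² + (2/3)h³ + 4h² + 4C₁h + (2/3)C₂ = 0 holds for all z ∈ ℝ. -/

import Mathlib

open Real

lemma hasDerivAt_tanh' (x : ℝ) :
    HasDerivAt Real.tanh (1 - Real.tanh x ^ 2) x := by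
  have hc : Real.cosh x ≠ 0 := (Real.cosh_pos x).ne'
  have h := (Real.hasDerivAt_sinh x).div (Real.hasDerivAt_cosh x) hc
  have heq : (Real.cosh x * Real.cosh x - Real.sinh x * Real.sinh x) / Real.cosh x ^ 2
      = 1 - Real.tanh x ^ 2 := by
    rw [Real.tanh_eq_sinh_div_cosh]
    have h1 := Real.cosh_sq_sub_sinh_sq x
    field_simp
  rw [heq] at h
  exact h.congr_of_eventuallyEq
    (Filter.Eventually.of_forall fun y => Real.tanh_eq_sinh_div_cosh y)

/-- For `C₁ < 2`, `B = √(2(2−C₁))`, `A = (2−C₁)^{1/4}/2`, the function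
`h(z) = −2 + 2B − 3B tanh²(A(8^{1/4} arctan z + C))` satisfies the first-integral identity
`(z²+1)²(h')² + (2/3)h³ + 4h² + 4C₁h + (2/3)C₂ = 0` with
`C₂ = 12C₁ − 16 − 4(2−C₁)√(2(2−C₁))`, for all `z ∈ ℝ`. -/
theorem stmt14 (C₁ C : ℝ) (h1 : C₁ < 2) :
    let B : ℝ := Real.sqrt (2 * (2 - C₁))
    let A : ℝ := (2 - C₁) ^ ((1 : ℝ) / 4) / 2
    let C₂ : ℝ := 12 * C₁ - 16 - 4 * (2 - C₁) * Real.sqrt (2 * (2 - C₁))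
    let h : ℝ → ℝ := fun z =>
      -2 + 2 * B - 3 * B * Real.tanh (A * ((8 : ℝ) ^ ((1 : ℝ) / 4) * Real.arctan z + C)) ^ 2
    ∀ z : ℝ,
      (z ^ 2 + 1) ^ 2 * (deriv h z) ^ 2 + (2 / 3) * (h z) ^ 3 + 4 * (h z) ^ 2
        + 4 * C₁ * h z + (2 / 3) * C₂ = 0 := by
  intro B A C₂ h z
  have h2 : (0:ℝ) ≤ 2 - C₁ := by linarith
  have hB2 : B ^ 2 = 2 * (2 - C₁) := Real.sq_sqrt (by linarith)
  set k : ℝ := (8 : ℝ) ^ ((1 : ℝ) / 4) with hk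
  have hz1 : (1 : ℝ) + z ^ 2 ≠ 0 := by positivity
  -- derivative of the inner function
  have hdu : HasDerivAt (fun z : ℝ => A * (k * Real.arctan z + C))
      (A * (k * (1 / (1 + z ^ 2)))) z := by
    exact (((Real.hasDerivAt_arctan z).const_mul k).add_const C).const_mul A
  set u : ℝ := A * (k * Real.arctan z + C) with huz
  set t : ℝ := Real.tanh u with ht
  have hdt : HasDerivAt (fun z : ℝ => Real.tanh (A * (k * Real.arctan z + C)))
      ((1 - t ^ 2) * (A * (k * (1 / (1 + z ^ 2))))) z :=
    by have := (_root_.hasDerivAt_tanh' u).comp z hdu; exact this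
  have hdh : HasDerivAt h
      (-3 * B * (2 * t * ((1 - t ^ 2) * (A * (k * (1 / (1 + z ^ 2))))))) z := by
    have := ((hdt.pow 2).const_mul (3 * B)).neg.const_add (-2 + 2 * B)
    refine this.congr_deriv ?_
    ring
  have hd : deriv h z = -3 * B * (2 * t * ((1 - t ^ 2) * (A * (k * (1 / (1 + z ^ 2)))))) :=
    hdh.deriv
  have hA2k2 : A ^ 2 * k ^ 2 = B / 2 := by
    have hAk : ((2 - C₁) ^ ((1:ℝ)/4)) ^ 2 * k ^ 2 = ((2 - C₁) * 8) ^ ((1:ℝ)/2) := by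
      rw [hk, ← Real.rpow_natCast ((2 - C₁) ^ ((1:ℝ)/4)) 2,
        ← Real.rpow_natCast ((8:ℝ) ^ ((1:ℝ)/4)) 2,
        ← Real.rpow_mul h2, ← Real.rpow_mul (by norm_num)]
      push_cast
      rw [← Real.mul_rpow h2 (by norm_num)]
      norm_num
    have : ((2 - C₁) * 8 : ℝ) ^ ((1:ℝ)/2) = 2 * B := by
      rw [← Real.sqrt_eq_rpow, show ((2 - C₁) * 8 : ℝ) = (2 * (2 - C₁)) * 2 ^ 2 by ring,
        Real.sqrt_mul (by positivity), Real.sqrt_sq (by norm_num)]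
      simp only [B]; ring
    rw [show A ^ 2 = ((2 - C₁) ^ ((1:ℝ)/4)) ^ 2 / 4 by rw [show A = (2 - C₁) ^ ((1:ℝ)/4) / 2 from rfl]; ring]
    rw [div_mul_eq_mul_div, hAk, this]
    ring
  have hh : h z = -2 + 2 * B - 3 * B * t ^ 2 := by simp [h, ht, huz, hk]
  have hC₂ : C₂ = 12 * C₁ - 16 - 4 * (2 - C₁) * B := rfl
  rw [hd, hh, hC₂]
  have e1 : (z ^ 2 + 1) ^ 2 * (-3 * B * (2 * t * ((1 - t ^ 2) * (A * (k * (1 / (1 + z ^ 2))))))) ^ 2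
      = 36 * B ^ 2 * t ^ 2 * (1 - t ^ 2) ^ 2 * (A ^ 2 * k ^ 2) := by
    field_simp
    ring
  rw [e1, hA2k2]
  linear_combination ((4 * (-2 + 2 * B - 3 * B * t ^ 2) + 8 + 8 * B / 3) / 2) * hB2
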